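/- If x ≤ w in S_n is a smooth pair (i.e., #{transpositions t : x < x·t ≤ w} = ℓ(w)−ℓ(x)), then for any x' with x ≤ x' ≤ w, the pair (w, x') is also smooth. -/

import Mathlib

open Equiv

/-- Rank function: `rk w i j = #{u = 1,...,i : w(u) ≤ j}` (1-based via `Fin`). -/
def rk {n : ℕ} (w : Equiv.Perm (Fin n)) (i j : ℕ) : ℕ :=
  (Finset.univ.filter (fun u : Fin n => u.val + 1 ≤ i ∧ (w u).val + 1 ≤ j)).card

/-- Coxeter length = number of inversions. -/
def len {n : ℕ} (w : Equiv.Perm (Fin n)) : ℕ :=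
  (Finset.univ.filter (fun p : Fin n × Fin n => p.1 < p.2 ∧ w p.2 < w p.1)).card

/-- A transposition. -/
def IsTransposition {n : ℕ} (t : Equiv.Perm (Fin n)) : Prop :=
  ∃ i j : Fin n, i ≠ j ∧ t = Equiv.swap i j

/-- Bruhat order: generated by `x → x·t` for transpositions `t` increasing the length. -/
def bruhatLE {n : ℕ} : Equiv.Perm (Fin n) → Equiv.Perm (Fin n) → Prop :=
  Relation.ReflTransGen (fun x y => ∃ t, IsTransposition t ∧ y = x * t ∧ len x < len y)

/-- Strict Bruhat order. -/
def bruhatLT {n : ℕ} (x y : Equiv.Perm (Fin n)) : Prop := bruhatLE x y ∧ x ≠ y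

/-- Difference function `d_w(p,p')`. -/
def dOf {n : ℕ} (w : Equiv.Perm (Fin n)) (p q : ℕ × ℕ) : ℤ :=
  (rk w p.1 p.2 : ℤ) + rk w q.1 q.2 - rk w p.1 q.2 - rk w q.1 p.2

/-- Strictly comparable points: `(i'−i)(j'−j) > 0`. -/
def SCmp (p q : ℕ × ℕ) : Prop := (p.1 < q.1 ∧ p.2 < q.2) ∨ (q.1 < p.1 ∧ q.2 < p.2)

/-- Corners of the rectangle spanned by `p`, `q`. -/
def corners (p q : ℕ × ℕ) : Set (ℕ × ℕ) := {(p.1, q.2), (q.1, p.2)}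


section SmoothProof
open Finset

variable {n : ℕ}

lemma rk_mul (y σ : Perm (Fin n)) (a b : ℕ) :
    rk (y * σ) a b
      = (univ.filter (fun v : Fin n => (σ.symm v).val + 1 ≤ a ∧ (y v).val + 1 ≤ b)).card := by
  unfold rk
  refine Finset.card_bij' (fun u _ => σ u) (fun v _ => σ.symm v) ?_ ?_ ?_ ?_
  · intro u hu
    simp only [mem_filter, mem_univ, true_and] at hu ⊢
    simpa [Equiv.Perm.mul_apply] using hu
  · intro v hv
    simp only [mem_filter, mem_univ, true_and] at hv ⊢
    simpa [Equiv.Perm.mul_apply] using hv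
  · intro u _; simp
  · intro v _; simp

lemma rk_swap {y : Perm (Fin n)} {i j : Fin n} (hij : i < j) (hv : y i < y j) (a b : ℕ) :
    rk (y * Equiv.swap i j) a b
      + (if i.val < a ∧ a ≤ j.val ∧ (y i).val < b ∧ b ≤ (y j).val then 1 else 0)
      = rk y a b := by
  classical
  have hne : i ≠ j := ne_of_lt hij
  have h1 : rk (y * Equiv.swap i j) a b
      = ∑ v : Fin n, if ((Equiv.swap i j v).val + 1 ≤ a ∧ (y v).val + 1 ≤ b) then 1 else 0 := by
    rw [rk_mul]
    simp only [Equiv.symm_swap]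
    convert Finset.card_filter _ _ using 2
    ext v; simp
  have h2 : rk y a b = ∑ v : Fin n, if (v.val + 1 ≤ a ∧ (y v).val + 1 ≤ b) then 1 else 0 := by
    rw [rk]; rw [Finset.card_filter]
  rw [h1, h2]
  have hsub : ({i, j} : Finset (Fin n)) ⊆ univ := subset_univ _
  rw [← Finset.sum_sdiff hsub, ← Finset.sum_sdiff hsub]
  have hoff : ∀ v ∈ univ \ {i, j},
      (if ((Equiv.swap i j v).val + 1 ≤ a ∧ (y v).val + 1 ≤ b) then 1 else 0)
        = (if (v.val + 1 ≤ a ∧ (y v).val + 1 ≤ b) then (1:ℕ) else 0) := by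
    intro v hv
    simp only [mem_sdiff, mem_insert, mem_singleton] at hv
    rw [Equiv.swap_apply_of_ne_of_ne (by tauto) (by tauto)]
  rw [Finset.sum_congr rfl hoff]
  rw [Finset.sum_pair hne, Finset.sum_pair hne]
  simp only [Equiv.swap_apply_left, Equiv.swap_apply_right]
  have hij' : i.val < j.val := hij
  have hv' : (y i).val < (y j).val := hv
  split_ifs <;> omega

/-- `dom w x` means `x ≤ w` in Bruhat order (rank criterion). -/
def dom (w x : Perm (Fin n)) : Prop := ∀ a b : ℕ, rk w a b ≤ rk x a b

lemma mul_swap_apply_left (y : Perm (Fin n)) (i j : Fin n) : (y * Equiv.swap i j) i = y j := by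
  simp [Equiv.Perm.mul_apply]

lemma mul_swap_apply_right (y : Perm (Fin n)) (i j : Fin n) : (y * Equiv.swap i j) j = y i := by
  simp [Equiv.Perm.mul_apply]

lemma mul_swap_apply_other (y : Perm (Fin n)) {i j u : Fin n} (h1 : u ≠ i) (h2 : u ≠ j) :
    (y * Equiv.swap i j) u = y u := by
  simp [Equiv.Perm.mul_apply, Equiv.swap_apply_of_ne_of_ne h1 h2]

lemma mul_swap_swap (y : Perm (Fin n)) (i j : Fin n) : (y * Equiv.swap i j) * Equiv.swap i j = y :=
  Equiv.mul_swap_mul_self i j y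

/-- decreasing swap: rank goes up pointwise -/
lemma rk_swap_decr {y : Perm (Fin n)} {i j : Fin n} (hij : i < j) (hv : y j < y i) (a b : ℕ) :
    rk (y * Equiv.swap i j) a b
      = rk y a b
      + (if i.val < a ∧ a ≤ j.val ∧ (y j).val < b ∧ b ≤ (y i).val then 1 else 0) := by
  have h := rk_swap (y := y * Equiv.swap i j) hij
    (by rw [mul_swap_apply_left, mul_swap_apply_right]; exact hv) a b
  rw [mul_swap_swap, mul_swap_apply_left, mul_swap_apply_right] at h
  omega

lemma dom_swap_iff {w y : Perm (Fin n)} {i j : Fin n} (hij : i < j) (hv : y i < y j)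
    (hy : dom w y) :
    dom w (y * Equiv.swap i j)
      ↔ ∀ p q : ℕ, i.val < p → p ≤ j.val → (y i).val < q → q ≤ (y j).val →
          rk w p q < rk y p q := by
  constructor
  · intro hd p q h1 h2 h3 h4
    have e := rk_swap hij hv p q
    rw [if_pos ⟨h1, h2, h3, h4⟩] at e
    have := hd p q
    omega
  · intro hs a b
    have e := rk_swap hij hv a b
    by_cases hc : i.val < a ∧ a ≤ j.val ∧ (y i).val < b ∧ b ≤ (y j).val
    · rw [if_pos hc] at e
      have := hs a b hc.1 hc.2.1 hc.2.2.1 hc.2.2.2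
      omega
    · rw [if_neg hc] at e
      have := hy a b
      omega

lemma dom_swap_decr {w y : Perm (Fin n)} {i j : Fin n} (hij : i < j) (hv : y j < y i)
    (hy : dom w y) : dom w (y * Equiv.swap i j) := by
  intro a b
  rw [rk_swap_decr hij hv]
  exact le_trans (hy a b) (Nat.le_add_right _ _)

/-! ### length lemmas -/

lemma filter_lt_card (v : Fin n) : (univ.filter (fun u : Fin n => u < v)).card = v.val := by
  have : univ.filter (fun u : Fin n => u < v) = Finset.Iio v := by
    ext u; simp
  rw [this, Fin.card_Iio]

lemma rk_diag (y : Perm (Fin n)) (v : Fin n) :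
    rk y v.val (y v).val = (univ.filter (fun u : Fin n => u < v ∧ y u < y v)).card := by
  unfold rk
  apply congrArg Finset.card
  ext u
  simp only [mem_filter, mem_univ, true_and, Fin.lt_def]
  omega

lemma lenA (y : Perm (Fin n)) :
    len y + ∑ v : Fin n, rk y v.val (y v).val = ∑ v : Fin n, v.val := by
  classical
  have hlen : len y = ∑ v : Fin n,
      (univ.filter (fun u : Fin n => u < v ∧ y v < y u)).card := by
    unfold len
    rw [Finset.card_eq_sum_card_fiberwise (f := Prod.snd) (t := univ) (fun x _ => mem_univ _)]
    refine Finset.sum_congr rfl (fun v _ => ?_)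
    refine Finset.card_bij' (fun p _ => p.1) (fun u _ => (u, v)) ?_ ?_ ?_ ?_
    · intro p hp
      simp only [mem_filter, mem_univ, true_and] at hp ⊢
      obtain ⟨⟨h1, h2⟩, h3⟩ := hp
      subst h3; exact ⟨h1, h2⟩
    · intro u hu
      simp only [mem_filter, mem_univ, true_and] at hu
      exact mem_filter.2 ⟨mem_filter.2 ⟨mem_univ _, hu.1, hu.2⟩, rfl⟩
    · intro p hp
      simp only [mem_filter, mem_univ, true_and] at hp
      exact Prod.ext rfl hp.2.symm
    · intro u _; rfl
  rw [hlen, ← Finset.sum_add_distrib]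
  refine Finset.sum_congr rfl (fun v _ => ?_)
  rw [rk_diag]
  rw [← filter_lt_card v]
  have h1 : univ.filter (fun u : Fin n => u < v)
      = (univ.filter (fun u : Fin n => u < v)).filter (fun u => y v < y u)
        ∪ (univ.filter (fun u : Fin n => u < v)).filter (fun u => ¬ y v < y u) :=
    (Finset.filter_union_filter_not_eq _ _).symm
  have h2 : ((univ.filter (fun u : Fin n => u < v)).filter (fun u => y v < y u)).card
      + ((univ.filter (fun u : Fin n => u < v)).filter (fun u => ¬ y v < y u)).card
      = (univ.filter (fun u : Fin n => u < v)).card :=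
    Finset.card_filter_add_card_filter_not _
  have e1 : (univ.filter (fun u : Fin n => u < v)).filter (fun u => y v < y u)
      = univ.filter (fun u : Fin n => u < v ∧ y v < y u) := by
    rw [Finset.filter_filter]
  have e2 : (univ.filter (fun u : Fin n => u < v)).filter (fun u => ¬ y v < y u)
      = univ.filter (fun u : Fin n => u < v ∧ y u < y v) := by
    rw [Finset.filter_filter]
    refine Finset.filter_congr (fun u _ => ?_)
    constructor
    · rintro ⟨h1, h2⟩
      refine ⟨h1, lt_of_le_of_ne (not_lt.1 h2) ?_⟩
      exact fun he => (ne_of_lt h1) (y.injective he)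
    · rintro ⟨h1, h2⟩; exact ⟨h1, not_lt.2 (le_of_lt h2)⟩
  rw [e1, e2] at h2
  omega

lemma rk_two_by_two {y : Perm (Fin n)} {i j : Fin n} (hij : i < j) (hv : y i < y j) :
    rk y j.val (y i).val + rk y i.val (y j).val + 1
      ≤ rk y i.val (y i).val + rk y j.val (y j).val := by
  have hform : ∀ p q : ℕ, rk y p q = ∑ u : Fin n, if u.val + 1 ≤ p ∧ (y u).val + 1 ≤ q then 1 else 0 := by
    intro p q; rw [rk, Finset.card_filter]
  rw [hform, hform, hform, hform, ← Finset.sum_add_distrib, ← Finset.sum_add_distrib]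
  have key : ∀ u : Fin n,
      ((if u.val + 1 ≤ j.val ∧ (y u).val + 1 ≤ (y i).val then 1 else 0)
        + (if u.val + 1 ≤ i.val ∧ (y u).val + 1 ≤ (y j).val then 1 else 0) : ℕ)
      ≤ ((if u.val + 1 ≤ i.val ∧ (y u).val + 1 ≤ (y i).val then 1 else 0)
        + (if u.val + 1 ≤ j.val ∧ (y u).val + 1 ≤ (y j).val then 1 else 0)) := by
    intro u
    have hij' : i.val < j.val := hij
    have hv' : (y i).val < (y j).val := hv
    split_ifs <;> omega
  have hstrict :
      ((if i.val + 1 ≤ j.val ∧ (y i).val + 1 ≤ (y i).val then 1 else 0)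
        + (if i.val + 1 ≤ i.val ∧ (y i).val + 1 ≤ (y j).val then 1 else 0) : ℕ)
      < ((if i.val + 1 ≤ i.val ∧ (y i).val + 1 ≤ (y i).val then 1 else 0)
        + (if i.val + 1 ≤ j.val ∧ (y i).val + 1 ≤ (y j).val then 1 else 0)) := by
    have hij' : i.val < j.val := hij
    have hv' : (y i).val < (y j).val := hv
    split_ifs <;> omega
  have := Finset.sum_lt_sum (fun u (_ : u ∈ univ) => key u) ⟨i, mem_univ i, hstrict⟩
  omega

lemma len_swap_incr {y : Perm (Fin n)} {i j : Fin n} (hij : i < j) (hv : y i < y j) :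
    len y < len (y * Equiv.swap i j) := by
  classical
  set z := y * Equiv.swap i j with hz
  have hne : i ≠ j := ne_of_lt hij
  have e1 := lenA y
  have e2 := lenA z
  have hre : ∑ v : Fin n, rk z v.val (z v).val
      = ∑ v : Fin n, rk z ((Equiv.swap i j) v).val (y v).val := by
    rw [← Equiv.sum_comp (Equiv.swap i j) (fun v => rk z v.val (z v).val)]
    refine Finset.sum_congr rfl (fun v _ => ?_)
    congr 2
    rw [hz, Equiv.Perm.mul_apply, Equiv.swap_apply_self]
  have hsub : ({i, j} : Finset (Fin n)) ⊆ univ := subset_univ _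
  have hoff : ∀ v ∈ univ \ ({i, j} : Finset (Fin n)),
      rk z ((Equiv.swap i j) v).val (y v).val ≤ rk y v.val (y v).val := by
    intro v hv'
    simp only [mem_sdiff, mem_insert, mem_singleton] at hv'
    rw [Equiv.swap_apply_of_ne_of_ne (by tauto) (by tauto)]
    have h := rk_swap hij hv v.val (y v).val
    rw [← hz] at h
    omega
  have hoffsum : ∑ v ∈ univ \ ({i, j} : Finset (Fin n)), rk z ((Equiv.swap i j) v).val (y v).val
      ≤ ∑ v ∈ univ \ ({i, j} : Finset (Fin n)), rk y v.val (y v).val :=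
    Finset.sum_le_sum hoff
  have hi : rk z ((Equiv.swap i j) i).val (y i).val = rk y j.val (y i).val := by
    rw [Equiv.swap_apply_left]
    have h := rk_swap hij hv j.val (y i).val
    rw [← hz, if_neg (by omega)] at h
    omega
  have hj : rk z ((Equiv.swap i j) j).val (y j).val = rk y i.val (y j).val := by
    rw [Equiv.swap_apply_right]
    have h := rk_swap hij hv i.val (y j).val
    rw [← hz, if_neg (by omega)] at h
    omega
  have h22 := rk_two_by_two hij hv
  have key : ∑ v : Fin n, rk z ((Equiv.swap i j) v).val (y v).val + 1
      ≤ ∑ v : Fin n, rk y v.val (y v).val := by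
    rw [← Finset.sum_sdiff hsub (f := fun v => rk z ((Equiv.swap i j) v).val (y v).val),
      ← Finset.sum_sdiff hsub (f := fun v => rk y v.val (y v).val),
      Finset.sum_pair hne, Finset.sum_pair hne, hi, hj]
    omega
  rw [hre] at e2
  omega

lemma len_swap_decr {y : Perm (Fin n)} {i j : Fin n} (hij : i < j) (hv : y j < y i) :
    len (y * Equiv.swap i j) < len y := by
  have h := len_swap_incr (y := y * Equiv.swap i j) hij
    (by rw [mul_swap_apply_left, mul_swap_apply_right]; exact hv)
  rwa [mul_swap_swap] at h

lemma apply_ne {y : Perm (Fin n)} {i j : Fin n} (h : i ≠ j) : y i ≠ y j :=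
  fun he => h (y.injective he)

/-! ### Bruhat order basics -/

lemma bruhat_refl (x : Perm (Fin n)) : bruhatLE x x := Relation.ReflTransGen.refl

lemma bruhat_trans {x y z : Perm (Fin n)} (h1 : bruhatLE x y) (h2 : bruhatLE y z) :
    bruhatLE x z := Relation.ReflTransGen.trans h1 h2

lemma bruhat_edge_incr {y : Perm (Fin n)} {i j : Fin n} (hij : i < j) (hv : y i < y j) :
    bruhatLE y (y * Equiv.swap i j) :=
  Relation.ReflTransGen.single
    ⟨Equiv.swap i j, ⟨i, j, ne_of_lt hij, rfl⟩, rfl, len_swap_incr hij hv⟩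

lemma bruhat_edge_decr {y : Perm (Fin n)} {i j : Fin n} (hij : i < j) (hv : y j < y i) :
    bruhatLE (y * Equiv.swap i j) y := by
  have h := bruhat_edge_incr (y := y * Equiv.swap i j) hij
    (by rw [mul_swap_apply_left, mul_swap_apply_right]; exact hv)
  rwa [mul_swap_swap] at h

lemma len_mono {x y : Perm (Fin n)} (h : bruhatLE x y) : len x ≤ len y := by
  induction h with
  | refl => exact le_rfl
  | tail h1 h2 ih =>
    obtain ⟨t, _, rfl, hlt⟩ := h2
    omega

/-- normalize an edge -/
lemma edge_normalize {b : Perm (Fin n)} {t : Perm (Fin n)} (ht : IsTransposition t)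
    (hlen : len b < len (b * t)) :
    ∃ i j : Fin n, i < j ∧ b i < b j ∧ t = Equiv.swap i j := by
  obtain ⟨i, j, hne, rfl⟩ := ht
  rcases lt_or_gt_of_ne hne with hij | hij
  · rcases lt_or_gt_of_ne (apply_ne hne : b i ≠ b j) with hv | hv
    · exact ⟨i, j, hij, hv, rfl⟩
    · exact absurd hlen (by have := len_swap_decr hij hv; omega)
  · rw [Equiv.swap_comm] at hlen ⊢
    rcases lt_or_gt_of_ne (apply_ne hne.symm : b j ≠ b i) with hv | hv
    · exact ⟨j, i, hij, hv, rfl⟩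
    · exact absurd hlen (by have := len_swap_decr hij hv; omega)

lemma dom_of_bruhat {x w : Perm (Fin n)} (h : bruhatLE x w) : dom w x := by
  induction h with
  | refl => exact fun a b => le_rfl
  | tail h1 h2 ih =>
    obtain ⟨t, ht, rfl, hlt⟩ := h2
    obtain ⟨i, j, hij, hv, rfl⟩ := edge_normalize ht hlt
    intro a c
    have e := rk_swap hij hv a c
    have := ih a c
    omega

/-! ### interval counting helper -/

def cnt (y : Perm (Fin n)) (lo hi b : ℕ) : ℕ :=
  (univ.filter (fun u : Fin n => lo ≤ u.val ∧ u.val < hi ∧ (y u).val < b)).card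

lemma rk_eq_cnt (y : Perm (Fin n)) (a b : ℕ) : rk y a b = cnt y 0 a b := by
  unfold rk cnt
  apply congrArg Finset.card
  ext u
  simp only [mem_filter, mem_univ, true_and]
  omega

lemma cnt_split (y : Perm (Fin n)) {lo mid hi : ℕ} (h1 : lo ≤ mid) (h2 : mid ≤ hi) (b : ℕ) :
    cnt y lo hi b = cnt y lo mid b + cnt y mid hi b := by
  classical
  unfold cnt
  have e : univ.filter (fun u : Fin n => lo ≤ u.val ∧ u.val < hi ∧ (y u).val < b)
      = univ.filter (fun u : Fin n => lo ≤ u.val ∧ u.val < mid ∧ (y u).val < b)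
        ∪ univ.filter (fun u : Fin n => mid ≤ u.val ∧ u.val < hi ∧ (y u).val < b) := by
    ext u
    simp only [mem_filter, mem_union, mem_univ, true_and]
    omega
  rw [e, Finset.card_union_of_disjoint]
  exact Finset.disjoint_left.2 (by
    intro u hu1 hu2
    simp only [mem_filter, mem_univ, true_and] at hu1 hu2
    omega)

lemma cnt_single (y : Perm (Fin n)) (i : Fin n) (b : ℕ) :
    cnt y i.val (i.val + 1) b = if (y i).val < b then 1 else 0 := by
  classical
  unfold cnt
  have e : univ.filter (fun u : Fin n => i.val ≤ u.val ∧ u.val < i.val + 1 ∧ (y u).val < b)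
      = univ.filter (fun u : Fin n => u = i ∧ (y u).val < b) := by
    ext u
    simp only [mem_filter, mem_univ, true_and]
    constructor
    · rintro ⟨h1, h2, h3⟩
      have hu : u = i := Fin.ext (by omega)
      exact ⟨hu, h3⟩
    · rintro ⟨rfl, h3⟩
      exact ⟨le_rfl, by omega, h3⟩
  rw [e]
  by_cases hP : (y i).val < b
  · rw [if_pos hP]
    have e2 : univ.filter (fun u : Fin n => u = i ∧ (y u).val < b) = {i} := by
      ext u
      simp only [mem_filter, mem_univ, true_and, mem_singleton]
      exact ⟨fun h => h.1, fun h => ⟨h, by rw [h]; exact hP⟩⟩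
    rw [e2, Finset.card_singleton]
  · rw [if_neg hP]
    have e2 : univ.filter (fun u : Fin n => u = i ∧ (y u).val < b) = ∅ := by
      ext u
      simp only [mem_filter, mem_univ, true_and, Finset.notMem_empty, iff_false, not_and]
      rintro rfl
      exact hP
    rw [e2, Finset.card_empty]

lemma cnt_congr {x w : Perm (Fin n)} {hi : ℕ} (lo b : ℕ)
    (h : ∀ u : Fin n, u.val < hi → x u = w u) : cnt x lo hi b = cnt w lo hi b := by
  unfold cnt
  apply congrArg Finset.card
  ext u
  simp only [mem_filter, mem_univ, true_and]
  constructor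
  · rintro ⟨h1, h2, h3⟩; exact ⟨h1, h2, by rw [← h u h2]; exact h3⟩
  · rintro ⟨h1, h2, h3⟩; exact ⟨h1, h2, by rw [h u h2]; exact h3⟩

lemma cnt_monoV (y : Perm (Fin n)) (lo hi : ℕ) {b1 b2 : ℕ} (h : b1 ≤ b2) :
    cnt y lo hi b1 ≤ cnt y lo hi b2 := by
  apply Finset.card_le_card
  intro u hu
  simp only [mem_filter, mem_univ, true_and] at hu ⊢
  omega

/-! ### hard direction of Ehresmann criterion -/

lemma bruhat_of_dom_aux : ∀ (N : ℕ) (w x : Perm (Fin n)), len w < N → dom w x → bruhatLE x w := by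
  intro N
  induction N with
  | zero => intro w x h; omega
  | succ N ih =>
    intro w x hN hdom
    by_cases hxw : x = w
    · subst hxw; exact bruhat_refl x
    · classical
      -- minimal index where x and w differ
      have hS1 : (univ.filter (fun u : Fin n => x u ≠ w u)).Nonempty := by
        by_contra hc
        rw [Finset.not_nonempty_iff_eq_empty] at hc
        apply hxw
        apply Equiv.ext
        intro u
        by_contra hne
        have : u ∈ univ.filter (fun u : Fin n => x u ≠ w u) := mem_filter.2 ⟨mem_univ _, hne⟩
        rw [hc] at this
        exact absurd this (Finset.notMem_empty u)
      set i := (univ.filter (fun u : Fin n => x u ≠ w u)).min' hS1 with hidef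
      have hiS : x i ≠ w i := by
        have := Finset.min'_mem (univ.filter (fun u : Fin n => x u ≠ w u)) hS1
        exact (mem_filter.1 this).2
      have hprefix : ∀ u : Fin n, u < i → x u = w u := by
        intro u hu
        by_contra hc
        have hmem : u ∈ univ.filter (fun u : Fin n => x u ≠ w u) := mem_filter.2 ⟨mem_univ _, hc⟩
        exact absurd (Finset.min'_le _ _ hmem) (not_le.2 hu)
      have hprefixv : ∀ u : Fin n, u.val < i.val → x u = w u := fun u hu =>
        hprefix u (Fin.lt_def.2 hu)
      -- x i < w i
      have hxiwi : x i < w i := by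
        have hd := hdom (i.val + 1) ((w i).val + 1)
        rw [rk_eq_cnt, rk_eq_cnt, cnt_split w (Nat.zero_le _) (by omega : i.val ≤ i.val + 1),
          cnt_split x (Nat.zero_le _) (by omega : i.val ≤ i.val + 1), cnt_single, cnt_single,
          cnt_congr 0 ((w i).val + 1) hprefixv] at hd
        have hne : (x i).val ≠ (w i).val := fun h => hiS (Fin.ext h)
        rw [if_pos (by omega)] at hd
        by_cases hc : (x i).val < (w i).val + 1
        · exact Fin.lt_def.2 (by omega)
        · rw [if_neg hc] at hd; omega
      -- the witness set for j
      set S2 := univ.filter (fun u : Fin n => i < u ∧ x i ≤ w u ∧ w u < w i) with hS2def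
      have hS2 : S2.Nonempty := by
        refine ⟨w⁻¹ (x i), ?_⟩
        have hw0 : w (w⁻¹ (x i)) = x i := w.apply_symm_apply (x i)
        rw [hS2def, mem_filter]
        refine ⟨mem_univ _, ?_, by rw [hw0], by rw [hw0]; exact hxiwi⟩
        rcases lt_trichotomy (w⁻¹ (x i)) i with hlt | heq | hgt
        · exfalso
          have := hprefix _ hlt
          rw [hw0] at this
          exact (ne_of_lt hlt) (x.injective this)
        · exfalso
          rw [heq] at hw0
          exact hiS hw0.symm
        · exact hgt
      set j := S2.min' hS2 with hjdef
      have hjmem : j ∈ S2 := hjdef ▸ Finset.min'_mem S2 hS2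
      rw [hS2def, mem_filter] at hjmem
      obtain ⟨-, hij, hxiwj, hwji⟩ := hjmem
      have hmin : ∀ u : Fin n, u ∈ S2 → j ≤ u := by
        intro u hu
        rw [hjdef]
        exact Finset.min'_le _ _ hu
      -- the new permutation
      set w' := w * Equiv.swap i j with hw'def
      have hlen' : len w' < len w := len_swap_decr hij hwji
      have hedge : bruhatLE w' w := by
        have h := bruhat_edge_incr (y := w') hij
          (by rw [hw'def, mul_swap_apply_left, mul_swap_apply_right]; exact hwji)
        have e : w' * Equiv.swap i j = w := by rw [hw'def, mul_swap_swap]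
        rwa [e] at h
      have hdom' : dom w' x := by
        intro a b
        have e := rk_swap_decr hij hwji a b
        rw [← hw'def] at e
        by_cases hc : i.val < a ∧ a ≤ j.val ∧ (w j).val < b ∧ b ≤ (w i).val
        · rw [if_pos hc] at e
          obtain ⟨hc1, hc2, hc3, hc4⟩ := hc
          -- counting argument : rk w a b + 1 ≤ rk x a b
          have hcwj : (x i).val ≤ (w j).val := hxiwj
          have hsplitw : rk w a b = cnt w 0 i.val b + cnt w i.val (i.val+1) b
              + cnt w (i.val+1) a b := by
            rw [rk_eq_cnt, cnt_split w (Nat.zero_le _) (by omega : i.val ≤ a),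
              cnt_split w (by omega : i.val ≤ i.val + 1) (by omega : i.val + 1 ≤ a)]
            omega
          have hsplitx : rk x a b = cnt x 0 i.val b + cnt x i.val (i.val+1) b
              + cnt x (i.val+1) a b := by
            rw [rk_eq_cnt, cnt_split x (Nat.zero_le _) (by omega : i.val ≤ a),
              cnt_split x (by omega : i.val ≤ i.val + 1) (by omega : i.val + 1 ≤ a)]
            omega
          have hsplitwc : rk w a ((x i).val) = cnt w 0 i.val ((x i).val)
              + cnt w i.val (i.val+1) ((x i).val) + cnt w (i.val+1) a ((x i).val) := by
            rw [rk_eq_cnt, cnt_split w (Nat.zero_le _) (by omega : i.val ≤ a),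
              cnt_split w (by omega : i.val ≤ i.val + 1) (by omega : i.val + 1 ≤ a)]
            omega
          have hsplitxc : rk x a ((x i).val) = cnt x 0 i.val ((x i).val)
              + cnt x i.val (i.val+1) ((x i).val) + cnt x (i.val+1) a ((x i).val) := by
            rw [rk_eq_cnt, cnt_split x (Nat.zero_le _) (by omega : i.val ≤ a),
              cnt_split x (by omega : i.val ≤ i.val + 1) (by omega : i.val + 1 ≤ a)]
            omega
          have hpreb : cnt x 0 i.val b = cnt w 0 i.val b := cnt_congr 0 b hprefixv
          have hprec : cnt x 0 i.val ((x i).val) = cnt w 0 i.val ((x i).val) :=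
            cnt_congr 0 _ hprefixv
          have hmx : cnt x i.val (i.val+1) b = 1 := by
            rw [cnt_single, if_pos (by omega)]
          have hmw : cnt w i.val (i.val+1) b = 0 := by
            rw [cnt_single, if_neg (by omega)]
          have hmxc : cnt x i.val (i.val+1) ((x i).val) = 0 := by
            rw [cnt_single, if_neg (by omega)]
          have hmwc : cnt w i.val (i.val+1) ((x i).val) = 0 := by
            have hwiv : (w i).val > (x i).val := hxiwi
            rw [cnt_single, if_neg (by omega)]
          -- key : on (i,a) the w-values below b are exactly those below x i
          have hkey : cnt w (i.val+1) a b = cnt w (i.val+1) a ((x i).val) := by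
            unfold cnt
            apply congrArg Finset.card
            ext u
            simp only [mem_filter, mem_univ, true_and]
            constructor
            · rintro ⟨h1, h2, h3⟩
              refine ⟨h1, h2, ?_⟩
              have huj : u < j := Fin.lt_def.2 (by omega)
              have hnmem : u ∉ S2 := fun hm => absurd (hmin u hm) (not_le.2 huj)
              rw [hS2def, mem_filter] at hnmem
              push_neg at hnmem
              have hiu : i < u := Fin.lt_def.2 (by omega)
              have hwu : w u < w i := Fin.lt_def.2 (by omega)
              have h4 := hnmem (mem_univ _) hiu
              rcases lt_or_ge (w u) (x i) with hlt | hle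
              · exact hlt
              · exact absurd (h4 hle) (not_le.2 hwu)
            · rintro ⟨h1, h2, h3⟩
              exact ⟨h1, h2, by omega⟩
          have hdomc := hdom a ((x i).val)
          have hmono : cnt x (i.val+1) a ((x i).val) ≤ cnt x (i.val+1) a b :=
            cnt_monoV x _ _ (by omega)
          omega
        · rw [if_neg hc] at e
          rw [e]
          exact hdom a b
      exact bruhat_trans (ih w' x (by omega) hdom') hedge

lemma bruhat_of_dom {w x : Perm (Fin n)} (h : dom w x) : bruhatLE x w :=
  bruhat_of_dom_aux (len w + 1) w x (Nat.lt_succ_self _) h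

/-! ### counting transpositions -/

lemma swap_eq_swap_iff {a b c d : Fin n} (hab : a < b) (hcd : c < d)
    (h : Equiv.swap a b = Equiv.swap c d) : a = c ∧ b = d := by
  have hs : ({a, b} : Finset (Fin n)) = {c, d} := by
    rw [← Equiv.Perm.support_swap (ne_of_lt hab), ← Equiv.Perm.support_swap (ne_of_lt hcd), h]
  have ha : a = c ∨ a = d := by
    have : a ∈ ({c, d} : Finset (Fin n)) := by rw [← hs]; simp
    simpa using this
  have hb : b = c ∨ b = d := by
    have : b ∈ ({c, d} : Finset (Fin n)) := by rw [← hs]; simp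
    simpa using this
  have hab' : a.val < b.val := hab
  have hcd' : c.val < d.val := hcd
  have ha' : a.val = c.val ∨ a.val = d.val := ha.imp (congrArg Fin.val) (congrArg Fin.val)
  have hb' : b.val = c.val ∨ b.val = d.val := hb.imp (congrArg Fin.val) (congrArg Fin.val)
  rcases ha' with h1 | h1 <;> rcases hb' with h2 | h2 <;>
    exact ⟨Fin.ext (by omega), Fin.ext (by omega)⟩

lemma trans_len_ne {z t : Perm (Fin n)} (ht : IsTransposition t) : len (z * t) ≠ len z := by
  obtain ⟨i, j, hne, rfl⟩ := ht
  have hne' : z i ≠ z j := apply_ne hne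
  rcases lt_or_gt_of_ne hne with hij | hij
  · rcases lt_or_gt_of_ne hne' with hv | hv
    · exact Nat.ne_of_gt (len_swap_incr hij hv)
    · exact Nat.ne_of_lt (len_swap_decr hij hv)
  · rw [Equiv.swap_comm]
    rcases lt_or_gt_of_ne hne'.symm with hv | hv
    · exact Nat.ne_of_gt (len_swap_incr hij hv)
    · exact Nat.ne_of_lt (len_swap_decr hij hv)

lemma trans_edge_le {z t : Perm (Fin n)} (ht : IsTransposition t) (h : len z < len (z * t)) :
    bruhatLE z (z * t) := by
  obtain ⟨i, j, hij, hv, rfl⟩ := edge_normalize ht h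
  exact bruhat_edge_incr hij hv

lemma trans_edge_ge {z t : Perm (Fin n)} (ht : IsTransposition t) (h : len (z * t) < len z) :
    bruhatLE (z * t) z := by
  obtain ⟨i, j, hne, rfl⟩ := ht
  have hne' : z i ≠ z j := apply_ne hne
  rcases lt_or_gt_of_ne hne with hij | hij
  · rcases lt_or_gt_of_ne hne' with hv | hv
    · exact absurd h (by have := len_swap_incr hij hv; omega)
    · exact bruhat_edge_decr hij hv
  · rw [Equiv.swap_comm] at h ⊢
    rcases lt_or_gt_of_ne hne'.symm with hv | hv
    · exact absurd h (by have := len_swap_incr hij hv; omega)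
    · exact bruhat_edge_decr hij hv

open scoped Classical in
/-- number of transpositions `t` with `z * t ≤ w` -/
noncomputable def TS (w z : Perm (Fin n)) : Finset (Perm (Fin n)) :=
  univ.filter (fun t => IsTransposition t ∧ bruhatLE (z * t) w)

open scoped Classical in
noncomputable def CS (w z : Perm (Fin n)) : Finset (Perm (Fin n)) :=
  univ.filter (fun t => IsTransposition t ∧ bruhatLT z (z * t) ∧ bruhatLE (z * t) w)

open scoped Classical in
lemma card_decr_eq_len (z : Perm (Fin n)) :
    (univ.filter (fun t : Perm (Fin n) => IsTransposition t ∧ len (z * t) < len z)).card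
      = len z := by
  symm
  conv_lhs => rw [len]
  refine Finset.card_bij (fun p _ => Equiv.swap p.1 p.2) ?_ ?_ ?_
  · intro p hp
    simp only [mem_filter, mem_univ, true_and] at hp ⊢
    exact ⟨⟨p.1, p.2, ne_of_lt hp.1, rfl⟩, len_swap_decr hp.1 hp.2⟩
  · intro p hp q hq he
    simp only [mem_filter, mem_univ, true_and] at hp hq
    obtain ⟨h1, h2⟩ := swap_eq_swap_iff hp.1 hq.1 he
    exact Prod.ext h1 h2
  · intro t ht
    simp only [mem_filter, mem_univ, true_and] at ht
    obtain ⟨⟨i, j, hne, rfl⟩, hlen⟩ := ht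
    have hne' : z i ≠ z j := apply_ne hne
    rcases lt_or_gt_of_ne hne with hij | hij
    · refine ⟨(i, j), ?_, rfl⟩
      simp only [mem_filter, mem_univ, true_and]
      rcases lt_or_gt_of_ne hne' with hv | hv
      · exact absurd hlen (by have := len_swap_incr hij hv; omega)
      · exact ⟨hij, hv⟩
    · refine ⟨(j, i), ?_, Equiv.swap_comm j i⟩
      simp only [mem_filter, mem_univ, true_and]
      rw [Equiv.swap_comm] at hlen
      rcases lt_or_gt_of_ne hne'.symm with hv | hv
      · exact absurd hlen (by have := len_swap_incr hij hv; omega)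
      · exact ⟨hij, hv⟩

open scoped Classical in
lemma TS_card_eq {w z : Perm (Fin n)} (hz : bruhatLE z w) :
    (TS w z).card = len z + (CS w z).card := by
  have hpart := Finset.card_filter_add_card_filter_not
    (s := TS w z) (p := fun t => len (z * t) < len z)
  have hD : (TS w z).filter (fun t => len (z * t) < len z)
      = univ.filter (fun t : Perm (Fin n) => IsTransposition t ∧ len (z * t) < len z) := by
    rw [TS, Finset.filter_filter]
    refine Finset.filter_congr (fun t _ => ?_)
    constructor
    · rintro ⟨⟨ht, -⟩, hlen⟩; exact ⟨ht, hlen⟩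
    · rintro ⟨ht, hlen⟩
      exact ⟨⟨ht, bruhat_trans (trans_edge_ge ht hlen) hz⟩, hlen⟩
  have hU : (TS w z).filter (fun t => ¬ len (z * t) < len z) = CS w z := by
    rw [TS, CS, Finset.filter_filter]
    refine Finset.filter_congr (fun t _ => ?_)
    constructor
    · rintro ⟨⟨ht, hle⟩, hlen⟩
      have hlt : len z < len (z * t) := by have := trans_len_ne (z := z) ht; omega
      refine ⟨ht, ⟨trans_edge_le ht hlt, ?_⟩, hle⟩
      intro he
      rw [← he] at hlt
      omega
    · rintro ⟨ht, ⟨hle1, hne1⟩, hle⟩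
      have h1 : len z ≤ len (z * t) := len_mono hle1
      have h2 := trans_len_ne (z := z) ht
      exact ⟨⟨ht, hle⟩, by omega⟩
  rw [hD, hU, card_decr_eq_len] at hpart
  omega

/-! ### the exchange lemmas -/

lemma conj_swap (i j a b : Fin n) :
    Equiv.swap i j * Equiv.swap a b * Equiv.swap i j
      = Equiv.swap (Equiv.swap i j a) (Equiv.swap i j b) := by
  have h := Equiv.swap_apply_apply (Equiv.swap i j) a b
  rw [Equiv.swap_inv] at h
  exact h.symm

lemma WD' {w y : Perm (Fin n)} {i j : Fin n} (hij : i < j) (hv : y i < y j)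
    (hy : dom w y) (hyr : dom w (y * Equiv.swap i j))
    {a b : Fin n} (hab : a < b)
    (hrt : dom w ((y * Equiv.swap i j) * Equiv.swap a b)) :
    dom w (y * Equiv.swap a b)
      ∨ dom w (y * (Equiv.swap i j * Equiv.swap a b * Equiv.swap i j)) := by
  have hijv : i.val < j.val := hij
  have hvv : (y i).val < (y j).val := hv
  have hA := rk_swap hij hv
  have hAS := (dom_swap_iff hij hv hy).1 hyr
  rcases lt_or_gt_of_ne (apply_ne (ne_of_lt hab) : y a ≠ y b) with hvt | hvt
  swap
  · -- decreasing t : left trivially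
    exact Or.inl (dom_swap_decr hab hvt hy)
  · -- y a < y b
    have hvtv : (y a).val < (y b).val := hvt
    rcases eq_or_ne i a with rfl | hia
    · rcases eq_or_ne j b with rfl | hjb
      · exact Or.inl hyr
      · -- a = i, b ≠ j, i < b
        have hbj : b ≠ j := hjb.symm
        have hbi : b ≠ i := ne_of_gt hab
        have hyr1 : (y * Equiv.swap i j) i = y j := mul_swap_apply_left y i j
        have hyr2 : (y * Equiv.swap i j) b = y b := mul_swap_apply_other y hbi hbj
        rcases lt_or_gt_of_ne (apply_ne hbj : y b ≠ y j) with hvbj | hvjb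
        · -- y b < y j
          have hvbjv : (y b).val < (y j).val := hvbj
          rcases lt_or_ge j b with hjb | hbj' 
          · -- j < b : RIGHT, decreasing conjugate
            refine Or.inr ?_
            rw [conj_swap, Equiv.swap_apply_left, Equiv.swap_apply_of_ne_of_ne hbi hbj]
            exact dom_swap_decr hjb hvbj hy
          · -- b < j : LEFT, inside A
            have hbj'' : b.val < j.val := Fin.lt_def.1 (lt_of_le_of_ne hbj' hbj)
            refine Or.inl ((dom_swap_iff hab hvt hy).2 ?_)
            intro p q h1 h2 h3 h4
            exact hAS p q h1 (by omega) h3 (by omega)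
        · -- y j < y b
          have hvjbv : (y j).val < (y b).val := hvjb
          have hSD := (dom_swap_iff hab (by rw [hyr1, hyr2]; exact hvjb) hyr).1 hrt
          rw [hyr1, hyr2] at hSD
          rcases lt_or_ge j b with hjb | hbj'
          · -- j < b : RIGHT, increasing conjugate swap j b
            refine Or.inr ?_
            rw [conj_swap, Equiv.swap_apply_left, Equiv.swap_apply_of_ne_of_ne hbi hbj]
            refine (dom_swap_iff hjb hvjb hy).2 ?_
            intro p q h1 h2 h3 h4
            have h5 := hSD p q (by omega) h2 h3 h4
            have h6 := hA p q
            omega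
          · -- b < j : LEFT, split on q
            have hbj'' : b.val < j.val := Fin.lt_def.1 (lt_of_le_of_ne hbj' hbj)
            refine Or.inl ((dom_swap_iff hab hvt hy).2 ?_)
            intro p q h1 h2 h3 h4
            rcases le_or_gt q (y j).val with hq | hq
            · exact hAS p q h1 (by omega) h3 hq
            · have h5 := hSD p q h1 h2 hq h4
              have h6 := hA p q
              omega
    · have hai : a ≠ i := hia.symm
      rcases eq_or_ne j b with rfl | hjb
      · -- b = j, a ≠ i, a < j
        have haj : a ≠ j := ne_of_lt hab
        have hyr1 : (y * Equiv.swap i j) a = y a := mul_swap_apply_other y hai haj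
        have hyr2 : (y * Equiv.swap i j) j = y i := mul_swap_apply_right y i j
        rcases lt_or_gt_of_ne (apply_ne hai : y a ≠ y i) with hvai | hvia
        · -- y a < y i
          have hvaiv : (y a).val < (y i).val := hvai
          have hSD := (dom_swap_iff hab (by rw [hyr1, hyr2]; exact hvai) hyr).1 hrt
          rw [hyr1, hyr2] at hSD
          rcases lt_or_gt_of_ne hai with hai' | hai'
          · -- a < i : RIGHT, increasing conjugate swap a i
            refine Or.inr ?_
            rw [conj_swap, Equiv.swap_apply_of_ne_of_ne hai haj, Equiv.swap_apply_right]
            refine (dom_swap_iff hai' hvai hy).2 ?_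
            intro p q h1 h2 h3 h4
            have h5 := hSD p q h1 (by omega) h3 h4
            have h6 := hA p q
            omega
          · -- i < a : LEFT, split on q
            have hai'' : i.val < a.val := hai'
            refine Or.inl ((dom_swap_iff hab hvt hy).2 ?_)
            intro p q h1 h2 h3 h4
            rcases le_or_gt q (y i).val with hq | hq
            · have h5 := hSD p q h1 h2 h3 hq
              have h6 := hA p q
              omega
            · exact hAS p q (by omega) h2 hq h4
        · -- y i < y a
          have hviav : (y i).val < (y a).val := hvia
          rcases lt_or_gt_of_ne hai with hai' | hai'
          · -- a < i : RIGHT, decreasing conjugate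
            refine Or.inr ?_
            rw [conj_swap, Equiv.swap_apply_of_ne_of_ne hai haj, Equiv.swap_apply_right]
            exact dom_swap_decr hai' hvia hy
          · -- i < a : LEFT, inside A
            have hai'' : i.val < a.val := hai'
            refine Or.inl ((dom_swap_iff hab hvt hy).2 ?_)
            intro p q h1 h2 h3 h4
            exact hAS p q (by omega) h2 (by omega) h4
      · have hbj : b ≠ j := hjb.symm
        rcases eq_or_ne j a with rfl | hja
        · -- a = j, j < b : LEFT
          have hbi : b ≠ i := fun h => by
            have : b.val = i.val := congrArg Fin.val h
            have : j.val < b.val := hab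
            omega
          have hyr1 : (y * Equiv.swap i j) j = y i := mul_swap_apply_right y i j
          have hyr2 : (y * Equiv.swap i j) b = y b := mul_swap_apply_other y hbi hbj
          have hSD := (dom_swap_iff hab (by rw [hyr1, hyr2]; exact lt_trans hv hvt) hyr).1 hrt
          rw [hyr1, hyr2] at hSD
          refine Or.inl ((dom_swap_iff hab hvt hy).2 ?_)
          intro p q h1 h2 h3 h4
          have h5 := hSD p q h1 h2 (by omega) h4
          have h6 := hA p q
          omega
        · have haj : a ≠ j := hja.symm
          rcases eq_or_ne i b with rfl | hib
          · -- b = i, a < i : LEFT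
            have hyr1 : (y * Equiv.swap i j) a = y a := mul_swap_apply_other y hai haj
            have hyr2 : (y * Equiv.swap i j) i = y j := mul_swap_apply_left y i j
            have hSD := (dom_swap_iff hab (by rw [hyr1, hyr2]; exact lt_trans hvt hv) hyr).1 hrt
            rw [hyr1, hyr2] at hSD
            refine Or.inl ((dom_swap_iff hab hvt hy).2 ?_)
            intro p q h1 h2 h3 h4
            have h5 := hSD p q h1 h2 h3 (by omega)
            have h6 := hA p q
            omega
          · -- disjoint : LEFT
            have hbi : b ≠ i := hib.symm
            have hyr1 : (y * Equiv.swap i j) a = y a := mul_swap_apply_other y hai haj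
            have hyr2 : (y * Equiv.swap i j) b = y b := mul_swap_apply_other y hbi hbj
            have hSD := (dom_swap_iff hab (by rw [hyr1, hyr2]; exact hvt) hyr).1 hrt
            rw [hyr1, hyr2] at hSD
            refine Or.inl ((dom_swap_iff hab hvt hy).2 ?_)
            intro p q h1 h2 h3 h4
            have h5 := hSD p q h1 h2 h3 h4
            have h6 := hA p q
            omega

lemma INJ' {w y : Perm (Fin n)} {i j : Fin n} (hij : i < j) (hv : y i < y j)
    (hy : dom w y) (hyr : dom w (y * Equiv.swap i j))
    {a b : Fin n} (hab : a < b)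
    (hrt : dom w ((y * Equiv.swap i j) * Equiv.swap a b))
    (h3 : dom w (y * (Equiv.swap i j * Equiv.swap a b * Equiv.swap i j)))
    (h4 : dom w ((y * Equiv.swap a b) * Equiv.swap i j)) :
    dom w (y * Equiv.swap a b) := by
  have hijv : i.val < j.val := hij
  have hvv : (y i).val < (y j).val := hv
  have hA := rk_swap hij hv
  have hAS := (dom_swap_iff hij hv hy).1 hyr
  rcases lt_or_gt_of_ne (apply_ne (ne_of_lt hab) : y a ≠ y b) with hvt | hvt
  swap
  · exact dom_swap_decr hab hvt hy
  · have hvtv : (y a).val < (y b).val := hvt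
    rcases eq_or_ne i a with rfl | hia
    · rcases eq_or_ne j b with rfl | hjb
      · exact hyr
      · have hbj : b ≠ j := hjb.symm
        have hbi : b ≠ i := ne_of_gt hab
        have hji : j ≠ i := ne_of_gt hij
        have hyr1 : (y * Equiv.swap i j) i = y j := mul_swap_apply_left y i j
        have hyr2 : (y * Equiv.swap i j) b = y b := mul_swap_apply_other y hbi hbj
        have hz1 : (y * Equiv.swap i b) i = y b := mul_swap_apply_left y i b
        have hz2 : (y * Equiv.swap i b) j = y j := mul_swap_apply_other y hji hjb
        rcases lt_or_gt_of_ne (apply_ne hbj : y b ≠ y j) with hvbj | hvjb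
        · -- y b < y j
          have hvbjv : (y b).val < (y j).val := hvbj
          rcases lt_or_ge j b with hjb' | hbj'
          · -- j < b : via h4, increasing second step
            intro p q
            have e := rk_swap (y := y * Equiv.swap i b) hij
              (by rw [hz1, hz2]; exact hvbj) p q
            have h4' := h4 p q
            omega
          · -- b < j : inside A
            have hbj'' : b.val < j.val := Fin.lt_def.1 (lt_of_le_of_ne hbj' hbj)
            refine (dom_swap_iff hab hvt hy).2 ?_
            intro p q h1 h2 h3q h4q
            exact hAS p q h1 (by omega) h3q (by omega)
        · -- y j < y b
          have hvjbv : (y j).val < (y b).val := hvjb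
          have hSD := (dom_swap_iff hab (by rw [hyr1, hyr2]; exact hvjb) hyr).1 hrt
          rw [hyr1, hyr2] at hSD
          rcases lt_or_ge j b with hjb' | hbj'
          · -- j < b : four regions
            rw [conj_swap, Equiv.swap_apply_left,
              Equiv.swap_apply_of_ne_of_ne hbi hbj] at h3
            have hSD3 := (dom_swap_iff hjb' hvjb hy).1 h3
            refine (dom_swap_iff hab hvt hy).2 ?_
            intro p q h1 h2 h3q h4q
            rcases le_or_gt p j.val with hp | hp <;> rcases le_or_gt q (y j).val with hq | hq
            · exact hAS p q h1 hp h3q hq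
            · have h5 := hSD p q h1 h2 hq h4q
              have h6 := hA p q
              omega
            · have e1 := rk_swap_decr (y := y * Equiv.swap i b) hij
                (by rw [hz1, hz2]; exact hvjb) p q
              rw [hz1, hz2, if_neg (by omega)] at e1
              have e2 := rk_swap hab hvt p q
              rw [if_pos ⟨h1, h2, h3q, h4q⟩] at e2
              have h4' := h4 p q
              omega
            · exact hSD3 p q hp h2 hq h4q
          · -- b < j : split on q
            have hbj'' : b.val < j.val := Fin.lt_def.1 (lt_of_le_of_ne hbj' hbj)
            refine (dom_swap_iff hab hvt hy).2 ?_
            intro p q h1 h2 h3q h4q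
            rcases le_or_gt q (y j).val with hq | hq
            · exact hAS p q h1 (by omega) h3q hq
            · have h5 := hSD p q h1 h2 hq h4q
              have h6 := hA p q
              omega
    · have hai : a ≠ i := hia.symm
      rcases eq_or_ne j b with rfl | hjb
      · -- b = j
        have haj : a ≠ j := ne_of_lt hab
        have hij' : i ≠ j := ne_of_lt hij
        have hyr1 : (y * Equiv.swap i j) a = y a := mul_swap_apply_other y hai haj
        have hyr2 : (y * Equiv.swap i j) j = y i := mul_swap_apply_right y i j
        have hz1 : (y * Equiv.swap a j) i = y i := mul_swap_apply_other y hia hij'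
        have hz2 : (y * Equiv.swap a j) j = y a := mul_swap_apply_right y a j
        rcases lt_or_gt_of_ne (apply_ne hai : y a ≠ y i) with hvai | hvia
        · -- y a < y i
          have hvaiv : (y a).val < (y i).val := hvai
          have hSD := (dom_swap_iff hab (by rw [hyr1, hyr2]; exact hvai) hyr).1 hrt
          rw [hyr1, hyr2] at hSD
          rcases lt_or_gt_of_ne hai with hai' | hai'
          · -- a < i : three regions
            refine (dom_swap_iff hab hvt hy).2 ?_
            intro p q h1 h2 h3q h4q
            rcases le_or_gt q (y i).val with hq | hq
            · have h5 := hSD p q h1 h2 h3q hq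
              have h6 := hA p q
              omega
            · rcases le_or_gt p i.val with hp | hp
              · have e1 := rk_swap_decr (y := y * Equiv.swap a j) hij
                  (by rw [hz1, hz2]; exact hvai) p q
                rw [hz1, hz2, if_neg (by omega)] at e1
                have e2 := rk_swap hab hvt p q
                rw [if_pos ⟨h1, h2, h3q, h4q⟩] at e2
                have h4' := h4 p q
                omega
              · exact hAS p q hp h2 hq h4q
          · -- i < a : split on q
            have hai'' : i.val < a.val := hai'
            refine (dom_swap_iff hab hvt hy).2 ?_
            intro p q h1 h2 h3q h4q
            rcases le_or_gt q (y i).val with hq | hq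
            · have h5 := hSD p q h1 h2 h3q hq
              have h6 := hA p q
              omega
            · exact hAS p q (by omega) h2 hq h4q
        · -- y i < y a
          have hviav : (y i).val < (y a).val := hvia
          rcases lt_or_gt_of_ne hai with hai' | hai'
          · -- a < i : via h4, increasing second step
            intro p q
            have e := rk_swap (y := y * Equiv.swap a j) hij
              (by rw [hz1, hz2]; exact hvia) p q
            have h4' := h4 p q
            omega
          · -- i < a : inside A
            have hai'' : i.val < a.val := hai'
            refine (dom_swap_iff hab hvt hy).2 ?_
            intro p q h1 h2 h3q h4q
            exact hAS p q (by omega) h2 (by omega) h4q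
      · have hbj : b ≠ j := hjb.symm
        rcases eq_or_ne j a with rfl | hja
        · -- a = j, j < b
          have hbi : b ≠ i := fun h => by
            have : b.val = i.val := congrArg Fin.val h
            have : j.val < b.val := hab
            omega
          have hyr1 : (y * Equiv.swap i j) j = y i := mul_swap_apply_right y i j
          have hyr2 : (y * Equiv.swap i j) b = y b := mul_swap_apply_other y hbi hbj
          have hSD := (dom_swap_iff hab (by rw [hyr1, hyr2]; exact lt_trans hv hvt) hyr).1 hrt
          rw [hyr1, hyr2] at hSD
          refine (dom_swap_iff hab hvt hy).2 ?_
          intro p q h1 h2 h3q h4q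
          have h5 := hSD p q h1 h2 (by omega) h4q
          have h6 := hA p q
          omega
        · have haj : a ≠ j := hja.symm
          rcases eq_or_ne i b with rfl | hib
          · -- b = i, a < i
            have hyr1 : (y * Equiv.swap i j) a = y a := mul_swap_apply_other y hai haj
            have hyr2 : (y * Equiv.swap i j) i = y j := mul_swap_apply_left y i j
            have hSD := (dom_swap_iff hab (by rw [hyr1, hyr2]; exact lt_trans hvt hv) hyr).1 hrt
            rw [hyr1, hyr2] at hSD
            refine (dom_swap_iff hab hvt hy).2 ?_
            intro p q h1 h2 h3q h4q
            have h5 := hSD p q h1 h2 h3q (by omega)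
            have h6 := hA p q
            omega
          · -- disjoint
            have hbi : b ≠ i := hib.symm
            have hyr1 : (y * Equiv.swap i j) a = y a := mul_swap_apply_other y hai haj
            have hyr2 : (y * Equiv.swap i j) b = y b := mul_swap_apply_other y hbi hbj
            have hSD := (dom_swap_iff hab (by rw [hyr1, hyr2]; exact hvt) hyr).1 hrt
            rw [hyr1, hyr2] at hSD
            refine (dom_swap_iff hab hvt hy).2 ?_
            intro p q h1 h2 h3q h4q
            have h5 := hSD p q h1 h2 h3q h4q
            have h6 := hA p q
            omega

lemma WD {w y : Perm (Fin n)} {i j : Fin n} (hij : i < j) (hv : y i < y j)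
    (hy : dom w y) (hyr : dom w (y * Equiv.swap i j))
    {t : Perm (Fin n)} (ht : IsTransposition t)
    (hrt : dom w ((y * Equiv.swap i j) * t)) :
    dom w (y * t) ∨ dom w (y * (Equiv.swap i j * t * Equiv.swap i j)) := by
  obtain ⟨a, b, hne, rfl⟩ := ht
  rcases lt_or_gt_of_ne hne with h | h
  · exact WD' hij hv hy hyr h hrt
  · rw [Equiv.swap_comm a b] at hrt ⊢
    exact WD' hij hv hy hyr h hrt

lemma INJ {w y : Perm (Fin n)} {i j : Fin n} (hij : i < j) (hv : y i < y j)
    (hy : dom w y) (hyr : dom w (y * Equiv.swap i j))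
    {t : Perm (Fin n)} (ht : IsTransposition t)
    (hrt : dom w ((y * Equiv.swap i j) * t))
    (h3 : dom w (y * (Equiv.swap i j * t * Equiv.swap i j)))
    (h4 : dom w ((y * t) * Equiv.swap i j)) :
    dom w (y * t) := by
  obtain ⟨a, b, hne, rfl⟩ := ht
  rcases lt_or_gt_of_ne hne with h | h
  · exact INJ' hij hv hy hyr h hrt h3 h4
  · rw [Equiv.swap_comm a b] at hrt h3 h4 ⊢
    exact INJ' hij hv hy hyr h hrt h3 h4

open scoped Classical in
lemma TS_mono_edge {w y : Perm (Fin n)} {i j : Fin n} (hij : i < j) (hv : y i < y j)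
    (hyw : bruhatLE y w) (hyrw : bruhatLE (y * Equiv.swap i j) w) :
    (TS w (y * Equiv.swap i j)).card ≤ (TS w y).card := by
  have hdy : dom w y := dom_of_bruhat hyw
  have hdyr : dom w (y * Equiv.swap i j) := dom_of_bruhat hyrw
  apply Finset.card_le_card_of_injOn
    (f := fun t => if bruhatLE (y * t) w then t else Equiv.swap i j * t * Equiv.swap i j)
  · intro t ht
    simp only [TS, Finset.mem_coe, mem_filter, mem_univ, true_and] at ht ⊢
    obtain ⟨htr, hle⟩ := ht
    by_cases hb : bruhatLE (y * t) w
    · rw [if_pos hb]; exact ⟨htr, hb⟩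
    · rw [if_neg hb]
      have hdrt : dom w ((y * Equiv.swap i j) * t) := dom_of_bruhat hle
      rcases WD hij hv hdy hdyr htr hdrt with hL | hR
      · exact absurd (bruhat_of_dom hL) hb
      · constructor
        · obtain ⟨a, b, hne, rfl⟩ := htr
          exact ⟨Equiv.swap i j a, Equiv.swap i j b,
            fun h => hne ((Equiv.swap i j).injective h), conj_swap i j a b⟩
        · exact bruhat_of_dom hR
  · intro t1 h1 t2 h2 heq
    have h1' := Finset.mem_coe.1 h1
    have h2' := Finset.mem_coe.1 h2
    rw [TS, mem_filter] at h1' h2'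
    obtain ⟨-, htr1, hle1⟩ := h1'
    obtain ⟨-, htr2, hle2⟩ := h2'
    simp only at heq
    by_cases hb1 : bruhatLE (y * t1) w <;> by_cases hb2 : bruhatLE (y * t2) w
    · rwa [if_pos hb1, if_pos hb2] at heq
    · rw [if_pos hb1, if_neg hb2] at heq
      exfalso
      apply hb2
      apply bruhat_of_dom
      refine INJ hij hv hdy hdyr htr2 (dom_of_bruhat hle2) ?_ ?_
      · rw [← heq]; exact dom_of_bruhat hb1
      · have e : (y * Equiv.swap i j) * t1 = (y * t2) * Equiv.swap i j := by
          rw [heq]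
          simp only [mul_assoc, Equiv.swap_mul_self_mul]
        rw [← e]; exact dom_of_bruhat hle1
    · rw [if_neg hb1, if_pos hb2] at heq
      exfalso
      apply hb1
      apply bruhat_of_dom
      refine INJ hij hv hdy hdyr htr1 (dom_of_bruhat hle1) ?_ ?_
      · rw [heq]; exact dom_of_bruhat hb2
      · have e : (y * Equiv.swap i j) * t2 = (y * t1) * Equiv.swap i j := by
          rw [← heq]
          simp only [mul_assoc, Equiv.swap_mul_self_mul]
        rw [← e]; exact dom_of_bruhat hle2
    · rw [if_neg hb1, if_neg hb2] at heq
      exact mul_left_cancel (mul_right_cancel heq)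

lemma T_mono {w : Perm (Fin n)} : ∀ {z z' : Perm (Fin n)}, bruhatLE z z' → bruhatLE z' w →
    (TS w z').card ≤ (TS w z).card := by
  intro z z' h
  induction h with
  | refl => intro _; exact le_rfl
  | @tail b c hzb hbc ih =>
    intro hcw
    obtain ⟨t, ht, rfl, hlen⟩ := hbc
    obtain ⟨i, j, hij, hv, rfl⟩ := edge_normalize ht hlen
    have hbw : bruhatLE b w := bruhat_trans (bruhat_edge_incr hij hv) hcw
    exact le_trans (TS_mono_edge hij hv hbw hcw) (ih hbw)

open scoped Classical in
lemma ncard_CS (w z : Perm (Fin n)) :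
    {t : Perm (Fin n) | IsTransposition t ∧ bruhatLT z (z * t) ∧ bruhatLE (z * t) w}.ncard
      = (CS w z).card := by
  rw [← Set.ncard_coe_finset (CS w z)]
  congr 1
  ext t
  simp only [CS, Finset.coe_filter, Set.mem_setOf_eq, mem_univ, true_and]

lemma CS_self (w : Perm (Fin n)) : (CS w w).card = 0 := by
  classical
  rw [Finset.card_eq_zero, CS, Finset.filter_eq_empty_iff]
  rintro t - ⟨ht, ⟨hle1, hne1⟩, hle2⟩
  have h1 : len w ≤ len (w * t) := len_mono hle1
  have h2 : len (w * t) ≤ len w := len_mono hle2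
  have h3 := trans_len_ne (z := w) ht
  omega

theorem stmt17 (n : ℕ) (x w : Equiv.Perm (Fin n)) (hxw : bruhatLE x w)
    (hsmooth : (Set.ncard {t : Equiv.Perm (Fin n) |
        IsTransposition t ∧ bruhatLT x (x * t) ∧ bruhatLE (x * t) w} : ℤ) =
      (len w : ℤ) - len x) :
    ∀ x' : Equiv.Perm (Fin n), bruhatLE x x' → bruhatLE x' w →
      (Set.ncard {t : Equiv.Perm (Fin n) |
          IsTransposition t ∧ bruhatLT x' (x' * t) ∧ bruhatLE (x' * t) w} : ℤ) =
        (len w : ℤ) - len x' := by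
  intro x' hxx' hx'w
  classical
  rw [ncard_CS] at hsmooth
  rw [ncard_CS]
  have hCx := TS_card_eq hxw
  have hCx' := TS_card_eq hx'w
  have hCw := TS_card_eq (bruhat_refl w)
  have hCSw := CS_self w
  have hlenx : len x ≤ len w := len_mono hxw
  have hlenx' : len x' ≤ len w := len_mono hx'w
  have hmono1 : (TS w x').card ≤ (TS w x).card := T_mono hxx' hx'w
  have hmono2 : (TS w w).card ≤ (TS w x').card := T_mono hx'w (bruhat_refl w)
  omega

end SmoothProof
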